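/- For n > k ≥ 3, every induced-A_{k+1}-saturated family in B_n has size at least 3n - 1. -/

import Mathlib

/-- `F` contains `m` pairwise incomparable sets (an induced copy of the
antichain `A_m`). -/
def AntichainCopy {n : ℕ} (m : ℕ) (F : Finset (Finset (Fin n))) : Prop :=
  ∃ G ⊆ F, G.card = m ∧ IsAntichain (· ⊆ ·) (G : Set (Finset (Fin n)))

/-- `F` is induced-`A_m`-saturated in `B_n`. -/
def ASaturated {n : ℕ} (m : ℕ) (F : Finset (Finset (Fin n))) : Prop :=
  ¬ AntichainCopy m F ∧ ∀ S ∉ F, AntichainCopy m (insert S F)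


open Finset

/-- colors are injective on antichains, hence surjective onto `range K` when the
antichain has size `K`. -/
private lemma sat8_surj {α : Type*} [DecidableEq α] [PartialOrder α] (G : Finset α) (K : ℕ)
    (c : α → ℕ) (hcard : G.card = K) (hlt : ∀ x ∈ G, c x < K)
    (hchain : ∀ x ∈ G, ∀ y ∈ G, c x = c y → x ≤ y ∨ y ≤ x)
    (hanti : IsAntichain (· ≤ ·) (G : Set α)) :
    ∀ j < K, ∃ x ∈ G, c x = j := by
  classical
  have hinj : Set.InjOn c G := by
    intro x hx y hy hxy
    by_contra hne
    rcases hchain x hx y hy hxy with h | h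
    · exact hanti hx hy hne h
    · exact hanti hy hx (Ne.symm hne) h
  have himg : G.image c = Finset.range K := by
    apply Finset.eq_of_subset_of_card_le
    · intro j hj
      obtain ⟨x, hx, rfl⟩ := Finset.mem_image.mp hj
      exact Finset.mem_range.mpr (hlt x hx)
    · rw [Finset.card_range, Finset.card_image_of_injOn hinj, hcard]
  intro j hj
  have : j ∈ G.image c := by rw [himg]; exact Finset.mem_range.mpr hj
  obtain ⟨x, hx, hcx⟩ := Finset.mem_image.mp this
  exact ⟨x, hx, hcx⟩

/-- a nonempty finite chain has a greatest element. -/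
private lemma sat8_chain_max {α : Type*} [DecidableEq α] [PartialOrder α] (T : Finset α)
    (hne : T.Nonempty) (hchain : ∀ x ∈ T, ∀ y ∈ T, x ≤ y ∨ y ≤ x) :
    ∃ m ∈ T, ∀ x ∈ T, x ≤ m := by
  obtain ⟨m, hm, hmax⟩ := T.exists_maximal hne
  refine ⟨m, hm, fun x hx => ?_⟩
  rcases hchain x hx m hm with h | h
  · exact h
  · rcases eq_or_ne m x with rfl | hne'
    · exact le_refl _
    · exact absurd (le_antisymm h (hmax hx h)) hne'

/-- Dilworth's theorem, coloring form (Galvin's proof). -/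
private lemma sat8_dilworth {α : Type*} [DecidableEq α] [PartialOrder α] (F : Finset α) :
    ∀ (k : ℕ), (∀ G ⊆ F, IsAntichain (· ≤ ·) (G : Set α) → G.card ≤ k) →
    ∃ c : α → ℕ, (∀ a ∈ F, c a < k) ∧
      ∀ a ∈ F, ∀ b ∈ F, c a = c b → a ≤ b ∨ b ≤ a := by
  classical
  induction F using Finset.strongInduction with
  | _ F ih =>
  intro k hk
  rcases F.eq_empty_or_nonempty with rfl | hne
  · exact ⟨fun _ => 0, by simp, by simp⟩
  obtain ⟨a, haF, hamax⟩ := F.exists_maximal hne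
  have hFsub : F.erase a ⊂ F := Finset.erase_ssubset haF
  set F' := F.erase a with hF'def
  set 𝒜 := F'.powerset.filter (fun (G : Finset α) => IsAntichain (· ≤ ·) (G : Set α)) with h𝒜
  set K := 𝒜.sup (fun G => G.card) with hK
  have hmem𝒜 : ∀ G, G ∈ 𝒜 ↔ G ⊆ F' ∧ IsAntichain (· ≤ ·) (G : Set α) := by
    intro G; simp [h𝒜, Finset.mem_filter, Finset.mem_powerset]
  have h𝒜ne : 𝒜.Nonempty := ⟨∅, (hmem𝒜 ∅).mpr ⟨Finset.empty_subset _, by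
    rw [Finset.coe_empty]; exact Set.Subsingleton.isAntichain Set.subsingleton_empty _⟩⟩
  have hbound' : ∀ G ⊆ F', IsAntichain (· ≤ ·) (G : Set α) → G.card ≤ K :=
    fun G hG hGa => Finset.le_sup (f := fun (G : Finset α) => G.card) ((hmem𝒜 G).mpr ⟨hG, hGa⟩)
  have hF'F : F' ⊆ F := Finset.erase_subset _ _
  have hKk : K ≤ k := by
    obtain ⟨G₀, hG₀, hKeq⟩ := Finset.exists_mem_eq_sup 𝒜 h𝒜ne (fun G => G.card)
    rw [hK, hKeq]
    exact hk G₀ (((hmem𝒜 G₀).mp hG₀).1.trans hF'F) ((hmem𝒜 G₀).mp hG₀).2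
  rcases Nat.eq_zero_or_pos K with hK0 | hKpos
  · -- K = 0 : F' is empty, F = {a}
    have hF'e : F' = ∅ := by
      by_contra h
      obtain ⟨x, hx⟩ := Finset.nonempty_iff_ne_empty.mpr h
      have : ({x} : Finset α).card ≤ K := hbound' {x} (Finset.singleton_subset_iff.mpr hx)
        (by rw [Finset.coe_singleton]; exact Set.subsingleton_singleton.isAntichain _)
      simp [hK0] at this
    have hFa : F = {a} := by
      apply Finset.eq_singleton_iff_unique_mem.mpr
      refine ⟨haF, fun x hx => ?_⟩
      by_contra hxa
      have : x ∈ F' := Finset.mem_erase.mpr ⟨hxa, hx⟩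
      simp [hF'e] at this
    have hk1 : 1 ≤ k := by
      have := hk {a} (by simp [hFa])
        (by rw [Finset.coe_singleton]; exact Set.subsingleton_singleton.isAntichain _)
      simpa using this
    refine ⟨fun _ => 0, fun x _ => hk1, fun x hx y hy _ => ?_⟩
    rw [hFa] at hx hy; simp at hx hy; subst hx; subst hy; exact Or.inl le_rfl
  -- K ≥ 1
  obtain ⟨c', hc'lt, hc'chain⟩ := ih F' hFsub K hbound'
  -- the maximal elements per color lying in a maximum antichain
  have key : ∀ j, ∃ aj, j < K →
      ((aj ∈ F' ∧ c' aj = j ∧ ∃ G ⊆ F', IsAntichain (· ≤ ·) (G : Set α) ∧ G.card = K ∧ aj ∈ G) ∧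
       (∀ x ∈ F', c' x = j →
         (∃ G ⊆ F', IsAntichain (· ≤ ·) (G : Set α) ∧ G.card = K ∧ x ∈ G) → x ≤ aj)) := by
    intro j
    by_cases hj : j < K
    swap
    · exact ⟨a, fun h => absurd h hj⟩
    -- T j nonempty
    obtain ⟨G₀, hG₀m, hKeq⟩ := Finset.exists_mem_eq_sup 𝒜 h𝒜ne (fun G => G.card)
    obtain ⟨hG₀sub, hG₀anti⟩ := (hmem𝒜 G₀).mp hG₀m
    have hG₀card : G₀.card = K := hKeq.symm
    set T := F'.filter (fun x => c' x = j ∧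
      ∃ G ⊆ F', IsAntichain (· ≤ ·) (G : Set α) ∧ G.card = K ∧ x ∈ G) with hT
    have hTne : T.Nonempty := by
      obtain ⟨x, hxG, hxc⟩ := sat8_surj G₀ K c' hG₀card (fun x hx => hc'lt x (hG₀sub hx))
        (fun x hx y hy => hc'chain x (hG₀sub hx) y (hG₀sub hy)) hG₀anti j hj
      exact ⟨x, Finset.mem_filter.mpr ⟨hG₀sub hxG, hxc, G₀, hG₀sub, hG₀anti, hG₀card, hxG⟩⟩
    have hTchain : ∀ x ∈ T, ∀ y ∈ T, x ≤ y ∨ y ≤ x := by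
      intro x hx y hy
      have hx' := Finset.mem_filter.mp hx
      have hy' := Finset.mem_filter.mp hy
      exact hc'chain x hx'.1 y hy'.1 (hx'.2.1.trans hy'.2.1.symm)
    obtain ⟨aj, hajT, hajmax⟩ := sat8_chain_max T hTne hTchain
    have haj' := Finset.mem_filter.mp hajT
    refine ⟨aj, fun _ => ⟨⟨haj'.1, haj'.2.1, haj'.2.2⟩, fun x hx hcx hex => ?_⟩⟩
    exact hajmax x (Finset.mem_filter.mpr ⟨hx, hcx, hex⟩)
  choose aa haa using key
  by_cases hcase : ∃ j < K, aa j ≤ a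
  · -- remove the chain through aa j and a
    obtain ⟨j, hj, hja⟩ := hcase
    set C : Finset α := insert a (F'.filter (fun x => c' x = j ∧ x ≤ aa j)) with hC
    have hCchain : ∀ x ∈ C, ∀ y ∈ C, x ≤ y ∨ y ≤ x := by
      intro x hx y hy
      rw [hC, Finset.mem_insert] at hx hy
      rcases hx with rfl | hx
      · rcases hy with rfl | hy
        · exact Or.inl le_rfl
        · exact Or.inr ((Finset.mem_filter.mp hy).2.2.trans hja)
      · rcases hy with rfl | hy
        · exact Or.inl ((Finset.mem_filter.mp hx).2.2.trans hja)
        · have hx' := Finset.mem_filter.mp hx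
          have hy' := Finset.mem_filter.mp hy
          exact hc'chain x hx'.1 y hy'.1 (hx'.2.1.trans hy'.2.1.symm)
    set G := F \ C with hG
    have hGF' : G ⊆ F' := by
      intro x hx
      rw [hG, Finset.mem_sdiff] at hx
      refine Finset.mem_erase.mpr ⟨?_, hx.1⟩
      intro h; exact hx.2 (h ▸ Finset.mem_insert_self a _)
    have hGssub : G ⊂ F := by
      refine Finset.ssubset_iff_of_subset (Finset.sdiff_subset) |>.mpr ?_
      exact ⟨a, haF, fun h => (Finset.mem_sdiff.mp h).2 (Finset.mem_insert_self a _)⟩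
    have hGbound : ∀ H ⊆ G, IsAntichain (· ≤ ·) (H : Set α) → H.card ≤ K - 1 := by
      intro H hHG hHanti
      by_contra hcard
      push_neg at hcard
      have hKle : K ≤ H.card := by omega
      obtain ⟨H', hH'H, hH'card⟩ := Finset.exists_subset_card_eq hKle
      have hH'G : H' ⊆ G := hH'H.trans hHG
      have hH'anti : IsAntichain (· ≤ ·) (H' : Set α) :=
        hHanti.subset (Finset.coe_subset.mpr hH'H)
      obtain ⟨x, hxH', hxc⟩ := sat8_surj H' K c' hH'card
        (fun x hx => hc'lt x (hGF' (hH'G hx)))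
        (fun x hx y hy => hc'chain x (hGF' (hH'G hx)) y (hGF' (hH'G hy))) hH'anti j hj
      have hxF' : x ∈ F' := hGF' (hH'G hxH')
      have hxle : x ≤ aa j := (haa j hj).2 x hxF' hxc
        ⟨H', hH'G.trans hGF', hH'anti, hH'card, hxH'⟩
      have : x ∈ C := by
        rw [hC]
        exact Finset.mem_insert_of_mem (Finset.mem_filter.mpr ⟨hxF', hxc, hxle⟩)
      exact (Finset.mem_sdiff.mp (hH'G hxH')).2 this
    obtain ⟨c'', hc''lt, hc''chain⟩ := ih G hGssub (K - 1) hGbound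
    refine ⟨fun x => if x ∈ C then K - 1 else c'' x, ?_, ?_⟩
    · intro x hxF
      by_cases hxC : x ∈ C
      · simp only [hxC, if_true]; omega
      · simp only [hxC, if_false]
        have : c'' x < K - 1 := hc''lt x (Finset.mem_sdiff.mpr ⟨hxF, hxC⟩)
        omega
    · intro x hxF y hyF hxy
      by_cases hxC : x ∈ C <;> by_cases hyC : y ∈ C
      · exact hCchain x hxC y hyC
      · simp only [hxC, hyC, if_true, if_false] at hxy
        have : c'' y < K - 1 := hc''lt y (Finset.mem_sdiff.mpr ⟨hyF, hyC⟩)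
        omega
      · simp only [hxC, hyC, if_true, if_false] at hxy
        have : c'' x < K - 1 := hc''lt x (Finset.mem_sdiff.mpr ⟨hxF, hxC⟩)
        omega
      · simp only [hxC, hyC, if_false] at hxy
        exact hc''chain x (Finset.mem_sdiff.mpr ⟨hxF, hxC⟩) y (Finset.mem_sdiff.mpr ⟨hyF, hyC⟩) hxy
  · -- a is incomparable with all aa j : antichain of size K+1
    push_neg at hcase
    have hanotF' : a ∉ F' := fun h => (Finset.mem_erase.mp h).1 rfl
    set A : Finset α := insert a ((Finset.range K).image aa) with hA
    have himgmem : ∀ x, x ∈ (Finset.range K).image aa → ∃ j < K, aa j = x := by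
      intro x hx
      obtain ⟨j, hj, rfl⟩ := Finset.mem_image.mp hx
      exact ⟨j, Finset.mem_range.mp hj, rfl⟩
    have hnc : ∀ j < K, ¬ a ≤ aa j := by
      intro j hj hle
      have hajF' : aa j ∈ F' := ((haa j hj).1).1
      have hne' : a ≠ aa j := fun h => hanotF' (h ▸ hajF')
      exact hne' (le_antisymm hle (hamax (hF'F hajF') hle))
    have hpair : ∀ i < K, ∀ j < K, i ≠ j → ¬ aa i ≤ aa j := by
      intro i hi j hj hij hle
      obtain ⟨⟨hajF', hajc, G₁, hG₁sub, hG₁anti, hG₁card, hajG₁⟩, _⟩ := haa j hj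
      obtain ⟨x, hxG₁, hxc⟩ := sat8_surj G₁ K c' hG₁card (fun x hx => hc'lt x (hG₁sub hx))
        (fun x hx y hy => hc'chain x (hG₁sub hx) y (hG₁sub hy)) hG₁anti i hi
      have hxle : x ≤ aa i := (haa i hi).2 x (hG₁sub hxG₁) hxc ⟨G₁, hG₁sub, hG₁anti, hG₁card, hxG₁⟩
      have hxne : x ≠ aa j := by
        intro h
        rw [h] at hxc
        rw [hajc] at hxc
        exact hij hxc.symm
      exact hG₁anti hxG₁ hajG₁ hxne (hxle.trans hle)
    have hinj : Set.InjOn aa (Finset.range K) := by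
      intro i hi j hj hij
      have hi' := Finset.mem_range.mp (by exact_mod_cast hi)
      have hj' := Finset.mem_range.mp (by exact_mod_cast hj)
      have h1 : c' (aa i) = i := ((haa i hi').1).2.1
      have h2 : c' (aa j) = j := ((haa j hj').1).2.1
      rw [← h1, ← h2, hij]
    have hanotimg : a ∉ (Finset.range K).image aa := by
      intro h
      obtain ⟨j, hj, hja⟩ := himgmem a h
      exact hanotF' (hja ▸ ((haa j hj).1).1)
    have hAcard : A.card = K + 1 := by
      rw [hA, Finset.card_insert_of_notMem hanotimg, Finset.card_image_of_injOn hinj,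
        Finset.card_range]
    have hAF : A ⊆ F := by
      intro x hx
      rw [hA, Finset.mem_insert] at hx
      rcases hx with rfl | hx
      · exact haF
      · obtain ⟨j, hj, hja⟩ := himgmem x hx
        exact hF'F (hja ▸ ((haa j hj).1).1)
    have hAanti : IsAntichain (· ≤ ·) (A : Set α) := by
      intro x hx y hy hne' hle
      rw [Finset.mem_coe, hA, Finset.mem_insert] at hx hy
      rcases hx with rfl | hx
      · rcases hy with rfl | hy
        · exact hne' rfl
        · obtain ⟨j, hj, hja⟩ := himgmem y hy
          exact hnc j hj (hja ▸ hle)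
      · obtain ⟨i, hi, hia⟩ := himgmem x hx
        rcases hy with rfl | hy
        · exact hcase i hi (hia ▸ hle)
        · obtain ⟨j, hj, hja⟩ := himgmem y hy
          have hij : i ≠ j := by
            intro h
            exact hne' (by rw [← hia, ← hja, h])
          exact hpair i hi j hj hij (by rw [hia, hja]; exact hle)
    have hKk' : K + 1 ≤ k := hAcard ▸ hk A hAF hAanti
    refine ⟨fun x => if x = a then K else c' x, ?_, ?_⟩
    · intro x hxF
      by_cases hxa : x = a
      · simp only [hxa, if_true]; omega
      · simp only [hxa, if_false]
        have : c' x < K := hc'lt x (Finset.mem_erase.mpr ⟨hxa, hxF⟩)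
        omega
    · intro x hxF y hyF hxy
      by_cases hxa : x = a <;> by_cases hya : y = a
      · subst hxa; subst hya; exact Or.inl le_rfl
      · simp only [hxa, hya, if_true, if_false] at hxy
        have : c' y < K := hc'lt y (Finset.mem_erase.mpr ⟨hya, hyF⟩)
        omega
      · simp only [hxa, hya, if_true, if_false] at hxy
        have : c' x < K := hc'lt x (Finset.mem_erase.mpr ⟨hxa, hxF⟩)
        omega
      · simp only [hxa, hya, if_false] at hxy
        exact hc'chain x (Finset.mem_erase.mpr ⟨hxa, hxF⟩) y (Finset.mem_erase.mpr ⟨hya, hyF⟩) hxy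


private lemma sat8_anti_le {n k : ℕ} {F : Finset (Finset (Fin n))} (hF : ASaturated (k+1) F) :
    ∀ G ⊆ F, IsAntichain (· ⊆ ·) (G : Set (Finset (Fin n))) → G.card ≤ k := by
  intro G hG hanti
  by_contra h
  push_neg at h
  obtain ⟨G', hG'G, hG'card⟩ := Finset.exists_subset_card_eq (show k+1 ≤ G.card by omega)
  exact hF.1 ⟨G', hG'G.trans hG, hG'card, hanti.subset (Finset.coe_subset.mpr hG'G)⟩

private lemma sat8_wit {n k : ℕ} {F : Finset (Finset (Fin n))} (hF : ASaturated (k+1) F)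
    {X : Finset (Fin n)} (hX : X ∉ F) :
    ∃ G ⊆ F, G.card = k ∧ IsAntichain (· ⊆ ·) (G : Set (Finset (Fin n))) ∧
      ∀ W ∈ G, ¬ W ⊆ X ∧ ¬ X ⊆ W := by
  obtain ⟨G, hGsub, hGcard, hGanti⟩ := hF.2 X hX
  have hXG : X ∈ G := by
    by_contra hXG
    have hsub : G ⊆ F := fun y hy => by
      rcases Finset.mem_insert.mp (hGsub hy) with rfl | h
      · exact absurd hy hXG
      · exact h
    have := sat8_anti_le hF G hsub hGanti
    omega
  refine ⟨G.erase X, ?_, ?_, ?_, ?_⟩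
  · intro y hy
    have hy' := Finset.mem_erase.mp hy
    rcases Finset.mem_insert.mp (hGsub hy'.2) with h | h
    · exact absurd h hy'.1
    · exact h
  · rw [Finset.card_erase_of_mem hXG, hGcard]; omega
  · exact hGanti.subset (Finset.coe_subset.mpr (Finset.erase_subset _ _))
  · intro W hW
    have hW' := Finset.mem_erase.mp hW
    exact ⟨hGanti (Finset.mem_coe.mpr hW'.2) (Finset.mem_coe.mpr hXG) hW'.1,
      hGanti (Finset.mem_coe.mpr hXG) (Finset.mem_coe.mpr hW'.2) (Ne.symm hW'.1)⟩

private lemma sat8_mem_empty {n k : ℕ} {F : Finset (Finset (Fin n))} (hk : 1 ≤ k)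
    (hF : ASaturated (k+1) F) : (∅ : Finset (Fin n)) ∈ F := by
  by_contra h
  obtain ⟨G, hGF, hGcard, hGanti, hGinc⟩ := sat8_wit hF h
  have : G.Nonempty := Finset.card_pos.mp (by omega)
  obtain ⟨W, hW⟩ := this
  exact (hGinc W hW).2 (Finset.empty_subset W)

private lemma sat8_mem_univ {n k : ℕ} {F : Finset (Finset (Fin n))} (hk : 1 ≤ k)
    (hF : ASaturated (k+1) F) : (Finset.univ : Finset (Fin n)) ∈ F := by
  by_contra h
  obtain ⟨G, hGF, hGcard, hGanti, hGinc⟩ := sat8_wit hF h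
  have : G.Nonempty := Finset.card_pos.mp (by omega)
  obtain ⟨W, hW⟩ := this
  exact (hGinc W hW).1 (Finset.subset_univ W)

private lemma sat8_exists_notmem {n k : ℕ} {F : Finset (Finset (Fin n))} (hn : k + 1 ≤ n)
    (hF : ASaturated (k+1) F) : ∃ X : Finset (Fin n), X ∉ F := by
  by_contra h
  push_neg at h
  have hsing : ((Finset.univ : Finset (Fin n)).image fun a => ({a} : Finset (Fin n))).card = n := by
    rw [Finset.card_image_of_injective _ (fun a b hab => by
      simpa using hab), Finset.card_univ, Fintype.card_fin]
  obtain ⟨G, hGsub, hGcard⟩ := Finset.exists_subset_card_eq (le_trans hn (le_of_eq hsing.symm))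
  refine hF.1 ⟨G, fun x _ => h x, hGcard, ?_⟩
  intro x hx y hy hne hle
  obtain ⟨a, _, rfl⟩ := Finset.mem_image.mp (hGsub hx)
  obtain ⟨b, _, rfl⟩ := Finset.mem_image.mp (hGsub hy)
  exact hne (by simpa using hle)

private lemma sat8_compl_copy {n m : ℕ} {F : Finset (Finset (Fin n))} (h : AntichainCopy m F) :
    AntichainCopy m (F.image (·ᶜ)) := by
  obtain ⟨G, hGF, hGcard, hGanti⟩ := h
  refine ⟨G.image (·ᶜ), Finset.image_subset_image hGF,
    by rw [Finset.card_image_of_injective _ compl_injective, hGcard], ?_⟩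
  intro x hx y hy hne hle
  obtain ⟨a, ha, rfl⟩ := Finset.mem_image.mp hx
  obtain ⟨b, hb, rfl⟩ := Finset.mem_image.mp hy
  have hba : b ⊆ a := Finset.compl_subset_compl.mp hle
  exact hGanti (Finset.mem_coe.mpr hb) (Finset.mem_coe.mpr ha)
    (fun hh => hne (by rw [hh])) hba

private lemma sat8_compl_sat {n m : ℕ} {F : Finset (Finset (Fin n))} (hF : ASaturated m F) :
    ASaturated m (F.image (·ᶜ)) := by
  constructor
  · intro h
    have h2 := sat8_compl_copy h
    rw [Finset.image_image] at h2
    have h3 : ((·ᶜ) ∘ (·ᶜ) : Finset (Fin n) → Finset (Fin n)) = id :=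
      funext fun S => compl_compl S
    rw [h3, Finset.image_id] at h2
    exact hF.1 h2
  · intro S hS
    have hSc : Sᶜ ∉ F := by
      intro h
      exact hS (Finset.mem_image.mpr ⟨Sᶜ, h, compl_compl S⟩)
    have := sat8_compl_copy (hF.2 Sᶜ hSc)
    rw [Finset.image_insert, compl_compl] at this
    exact this

private lemma sat8_compl_count {n i : ℕ} (F : Finset (Finset (Fin n))) (hi : i ≤ n) :
    ((F.image (·ᶜ)).filter fun S => S.card = i).card = (F.filter fun S => S.card = n - i).card := by
  rw [Finset.filter_image, Finset.card_image_of_injective _ compl_injective]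
  congr 1
  apply Finset.filter_congr
  intro S _
  have h1 : Sᶜ.card = n - S.card := by simp [Finset.card_compl]
  have h2 : S.card ≤ n := by simpa using Finset.card_le_univ S
  constructor
  · intro h; simp only [h1] at h; omega
  · intro h; simp only [h1, h]; omega


private lemma sat8_le_choose : ∀ d r : ℕ, 1 ≤ r → r < d → d ≤ d.choose r := by
  intro d
  induction d with
  | zero => intro r h1 h2; omega
  | succ d ih =>
    intro r h1 h2
    by_cases hr1 : r = 1
    · subst hr1; rw [Nat.choose_one_right]
    · obtain ⟨r', rfl⟩ : ∃ r', r = r' + 2 := ⟨r - 2, by omega⟩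
      rw [Nat.choose_succ_succ]
      show d + 1 ≤ d.choose (r'+1) + d.choose (r'+2)
      rcases Nat.lt_or_ge (r'+2) d with hlt | hge
      · have h3 := ih (r'+2) (by omega) hlt
        have h4 : 1 ≤ d.choose (r'+1) := Nat.choose_pos (by omega)
        omega
      · have hrd : r' + 2 = d := by omega
        have h5 : d.choose (r'+2) = 1 := by rw [hrd, Nat.choose_self]
        have h6 : d.choose (r'+1) = d := by
          have e : r' + 1 = d - 1 := by omega
          rw [e, ← Nat.choose_symm (Nat.sub_le d 1), Nat.sub_sub_self (by omega : 1 ≤ d),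
            Nat.choose_one_right]
        omega

private lemma sat8_slice_mem {n : ℕ} {m' M' R : Finset (Fin n)} {i' : ℕ} (hsub : m' ⊆ M')
    (hmc : m'.card < i') (hR : R ∈ (M' \ m').powersetCard (i' - m'.card)) :
    m' ⊆ m' ∪ R ∧ m' ∪ R ⊆ M' ∧ (m' ∪ R).card = i' := by
  obtain ⟨hRD, hRcard⟩ := Finset.mem_powersetCard.mp hR
  have hdisj : Disjoint m' R :=
    Finset.disjoint_right.mpr fun {a} ha => (Finset.mem_sdiff.mp (hRD ha)).2
  refine ⟨Finset.subset_union_left, ?_, ?_⟩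
  · exact Finset.union_subset hsub (hRD.trans Finset.sdiff_subset)
  · rw [Finset.card_union_of_disjoint hdisj, hRcard]
    omega

private lemma sat8_slice_inj {n : ℕ} {m' M' : Finset (Fin n)} {r : ℕ} :
    Set.InjOn (fun R => m' ∪ R) ((M' \ m').powersetCard r) := by
  intro R hR R' hR' h
  simp only [Finset.mem_coe, Finset.mem_powersetCard] at hR hR'
  dsimp only at h
  ext a
  constructor
  · intro ha
    have ham : a ∉ m' := fun hm => (Finset.mem_sdiff.mp (hR.1 ha)).2 hm
    have h2 : a ∈ m' ∪ R' := h ▸ Finset.mem_union_right m' ha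
    exact (Finset.mem_union.mp h2).resolve_left ham
  · intro ha
    have ham : a ∉ m' := fun hm => (Finset.mem_sdiff.mp (hR'.1 ha)).2 hm
    have h2 : a ∈ m' ∪ R := h ▸ Finset.mem_union_right m' ha
    exact (Finset.mem_union.mp h2).resolve_left ham

private lemma sat8_pair {n : ℕ} (m' M' : Finset (Fin n)) (i' : ℕ) (A' B' : Finset (Fin n))
    (hsub : m' ⊆ M') (hmc : m'.card < i') (hMc : i' < M'.card)
    (hAB : ∀ S, m' ⊆ S → S ⊆ M' → S.card = i' → S = A' ∨ S = B') :
    A' ∩ B' = m' ∧ A' ∪ B' = M' ∧ m'.card + 1 = i' ∧ M'.card = i' + 1 := by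
  classical
  have hd : (M' \ m').card = M'.card - m'.card := Finset.card_sdiff_of_subset hsub
  have hmM : m'.card ≤ M'.card := Finset.card_le_card hsub
  have hr1 : 1 ≤ i' - m'.card := by omega
  have hrd : i' - m'.card < (M' \ m').card := by omega
  have hmapsto : ∀ R ∈ (M' \ m').powersetCard (i' - m'.card),
      m' ∪ R ∈ ({A', B'} : Finset (Finset (Fin n))) := by
    intro R hR
    obtain ⟨h1, h2, h3⟩ := sat8_slice_mem hsub hmc hR
    rcases hAB _ h1 h2 h3 with h | h <;> simp [h]
  have hcard2 : (M' \ m').card.choose (i' - m'.card) ≤ 2 := by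
    calc (M' \ m').card.choose (i' - m'.card)
        = ((M' \ m').powersetCard (i' - m'.card)).card :=
          (Finset.card_powersetCard _ _).symm
      _ ≤ ({A', B'} : Finset (Finset (Fin n))).card :=
          Finset.card_le_card_of_injOn _ hmapsto sat8_slice_inj
      _ ≤ 2 := (Finset.card_insert_le _ _).trans (by simp)
  have hD2 : (M' \ m').card = 2 :=
    le_antisymm (le_trans (sat8_le_choose _ _ hr1 hrd) hcard2) (by omega)
  have hr1' : i' - m'.card = 1 := by omega
  obtain ⟨u, v, huv, hDuv⟩ := Finset.card_eq_two.mp hD2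
  have hu : u ∈ M' \ m' := by rw [hDuv]; simp
  have hv : v ∈ M' \ m' := by rw [hDuv]; simp
  have hum : u ∉ m' := (Finset.mem_sdiff.mp hu).2
  have hvm : v ∉ m' := (Finset.mem_sdiff.mp hv).2
  have hSu := sat8_slice_mem hsub hmc (show {u} ∈ (M' \ m').powersetCard (i' - m'.card) by
    rw [hr1']
    exact Finset.mem_powersetCard.mpr ⟨Finset.singleton_subset_iff.mpr hu, Finset.card_singleton u⟩)
  have hSv := sat8_slice_mem hsub hmc (show {v} ∈ (M' \ m').powersetCard (i' - m'.card) by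
    rw [hr1']
    exact Finset.mem_powersetCard.mpr ⟨Finset.singleton_subset_iff.mpr hv, Finset.card_singleton v⟩)
  have hne : m' ∪ {u} ≠ m' ∪ {v} := by
    intro h
    have h2 : u ∈ m' ∪ {v} := h ▸ (Finset.mem_union_right m' (Finset.mem_singleton_self u))
    rcases Finset.mem_union.mp h2 with h3 | h3
    · exact hum h3
    · exact huv (Finset.mem_singleton.mp h3)
  have h1 := hAB _ hSu.1 hSu.2.1 hSu.2.2
  have h2 := hAB _ hSv.1 hSv.2.1 hSv.2.2
  have hinter : (m' ∪ {u}) ∩ (m' ∪ {v}) = m' := by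
    ext a
    simp only [Finset.mem_inter, Finset.mem_union, Finset.mem_singleton]
    constructor
    · rintro ⟨h3 | h3, h4 | h4⟩
      · exact h3
      · exact h3
      · exact h4
      · exact absurd (h3.symm.trans h4) huv
    · intro h3; exact ⟨Or.inl h3, Or.inl h3⟩
  have hunion : (m' ∪ {u}) ∪ (m' ∪ {v}) = M' := by
    have h3 : m' ∪ (M' \ m') = M' := Finset.union_sdiff_of_subset hsub
    rw [hDuv] at h3
    rw [← h3]
    ext a
    simp only [Finset.mem_union, Finset.mem_singleton, Finset.mem_insert]
    tauto
  have hinter2 : (m' ∪ {v}) ∩ (m' ∪ {u}) = m' := by rw [Finset.inter_comm]; exact hinter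
  have hunion2 : (m' ∪ {v}) ∪ (m' ∪ {u}) = M' := by rw [Finset.union_comm]; exact hunion
  rcases h1 with h1 | h1 <;> rcases h2 with h2 | h2
  · exact absurd (h1.trans h2.symm) hne
  · rw [← h1, ← h2]
    exact ⟨hinter, hunion, by omega, by omega⟩
  · rw [← h1, ← h2]
    exact ⟨hinter2, hunion2, by omega, by omega⟩
  · exact absurd (h1.trans h2.symm) hne
private lemma sat8_two {n : ℕ} (m' M' : Finset (Fin n)) (i' : ℕ)
    (hsub : m' ⊆ M') (hmc : m'.card < i') (hMc : i' < M'.card) :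
    ∃ S₁ S₂ : Finset (Fin n), S₁ ≠ S₂ ∧ (m' ⊆ S₁ ∧ S₁ ⊆ M' ∧ S₁.card = i') ∧
      (m' ⊆ S₂ ∧ S₂ ⊆ M' ∧ S₂.card = i') := by
  classical
  have hd : (M' \ m').card = M'.card - m'.card := Finset.card_sdiff_of_subset hsub
  have hmM : m'.card ≤ M'.card := Finset.card_le_card hsub
  have hr1 : 1 ≤ i' - m'.card := by omega
  have hrd : i' - m'.card < (M' \ m').card := by omega
  have hbig : 2 ≤ ((M' \ m').powersetCard (i' - m'.card)).card := by
    have h2d : 2 ≤ (M' \ m').card := by omega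
    rw [Finset.card_powersetCard]
    exact le_trans h2d (sat8_le_choose _ _ hr1 hrd)
  obtain ⟨R₁, hR₁, R₂, hR₂, hRne⟩ := Finset.one_lt_card.mp (show 1 < ((M' \ m').powersetCard (i' - m'.card)).card by omega)
  refine ⟨m' ∪ R₁, m' ∪ R₂, ?_, sat8_slice_mem hsub hmc hR₁, sat8_slice_mem hsub hmc hR₂⟩
  intro h
  exact hRne (sat8_slice_inj (Finset.mem_coe.mpr hR₁) (Finset.mem_coe.mpr hR₂) h)

private lemma sat8_core {n k : ℕ} (hk : 3 ≤ k) (hn : k < n) {F : Finset (Finset (Fin n))}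
    (hF : ASaturated (k+1) F) (i : ℕ) (hi1 : 1 ≤ i) (hi2 : i + 2 ≤ n) :
    3 ≤ (F.filter fun S => S.card = i).card := by
  classical
  by_contra hcon
  push_neg at hcon
  have hle : (F.filter fun S => S.card = i).card ≤ 2 := by omega
  obtain ⟨c, hclt, hchain'⟩ := sat8_dilworth F k (fun G hG hanti =>
    sat8_anti_le hF G hG (by simpa [Finset.le_iff_subset] using hanti))
  have hchain : ∀ x ∈ F, ∀ y ∈ F, c x = c y → x ⊆ y ∨ y ⊆ x := fun x hx y hy h =>
    (hchain' x hx y hy h).imp Finset.le_iff_subset.mp Finset.le_iff_subset.mp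
  have hGsurj : ∀ (G : Finset (Finset (Fin n))), G ⊆ F → G.card = k →
      IsAntichain (· ⊆ ·) (G : Set (Finset (Fin n))) → ∀ j, j < k → ∃ x ∈ G, c x = j := by
    intro G hG hcard hanti
    exact sat8_surj G k c hcard (fun x hx => hclt x (hG hx))
      (fun x hx y hy h => hchain' x (hG hx) y (hG hy) h)
      (by simpa [Finset.le_iff_subset] using hanti)
  have hwit1 : ∀ X : Finset (Fin n), X ∉ F → ∀ j, j < k →
      ∃ W, W ∈ F ∧ c W = j ∧ ¬ W ⊆ X ∧ ¬ X ⊆ W := by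
    intro X hX j hj
    obtain ⟨G, hGF, hGcard, hGanti, hGinc⟩ := sat8_wit hF hX
    obtain ⟨W, hWG, hWc⟩ := hGsurj G hGF hGcard hGanti j hj
    exact ⟨W, hGF hWG, hWc, (hGinc W hWG).1, (hGinc W hWG).2⟩
  have hwit2 : ∀ X : Finset (Fin n), X ∉ F → ∀ j j', j < k → j' < k → j ≠ j' →
      ∃ W W', W ∈ F ∧ W' ∈ F ∧ c W = j ∧ c W' = j' ∧ (¬ W ⊆ X ∧ ¬ X ⊆ W) ∧
        (¬ W' ⊆ X ∧ ¬ X ⊆ W') ∧ ¬ W ⊆ W' ∧ ¬ W' ⊆ W := by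
    intro X hX j j' hj hj' hne
    obtain ⟨G, hGF, hGcard, hGanti, hGinc⟩ := sat8_wit hF hX
    obtain ⟨W, hWG, hWc⟩ := hGsurj G hGF hGcard hGanti j hj
    obtain ⟨W', hW'G, hW'c⟩ := hGsurj G hGF hGcard hGanti j' hj'
    have hWW' : W ≠ W' := fun h => hne (by rw [← hWc, ← hW'c, h])
    exact ⟨W, W', hGF hWG, hGF hW'G, hWc, hW'c, hGinc W hWG, hGinc W' hW'G,
      hGanti (Finset.mem_coe.mpr hWG) (Finset.mem_coe.mpr hW'G) hWW',
      hGanti (Finset.mem_coe.mpr hW'G) (Finset.mem_coe.mpr hWG) hWW'.symm⟩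
  have hcomp : ∀ j, j < k → ∀ S : Finset (Fin n),
      (∀ W ∈ F, c W = j → (W ⊆ S ∨ S ⊆ W)) → S ∈ F := by
    intro j hj S hall
    by_contra hS
    obtain ⟨W, hWF, hWc, h1, h2⟩ := hwit1 S hS j hj
    rcases hall W hWF hWc with h | h
    · exact h1 h
    · exact h2 h
  have hslice : ∀ j, j < k → ∀ i', 1 ≤ i' → i' + 1 ≤ n →
      (∀ W ∈ F, c W = j → W.card ≠ i') →
      ∃ m' M' : Finset (Fin n), m' ⊆ M' ∧ m'.card < i' ∧ i' < M'.card ∧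
        (∀ W ∈ F, c W = j → (W ⊆ m' ∨ M' ⊆ W)) ∧
        (∀ S : Finset (Fin n), m' ⊆ S → S ⊆ M' → S.card = i' → S ∈ F) := by
    intro j hj i' h1 h2 hskip
    have hm' : ∃ m' : Finset (Fin n), m'.card < i' ∧
        (∀ W ∈ F, c W = j → W.card < i' → W ⊆ m') ∧
        (m' = ∅ ∨ (m' ∈ F ∧ c m' = j)) := by
      rcases (F.filter fun W => c W = j ∧ W.card < i').eq_empty_or_nonempty with hL | hL
      · refine ⟨∅, by simp; omega, ?_, Or.inl rfl⟩
        intro W hW hc hcard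
        have hmem : W ∈ F.filter fun W => c W = j ∧ W.card < i' :=
          Finset.mem_filter.mpr ⟨hW, hc, hcard⟩
        rw [hL] at hmem
        exact absurd hmem (Finset.notMem_empty W)
      · obtain ⟨m', hm'mem, hm'max⟩ := Finset.exists_max_image _ (fun W => W.card) hL
        have hm'f := Finset.mem_filter.mp hm'mem
        refine ⟨m', hm'f.2.2, ?_, Or.inr ⟨hm'f.1, hm'f.2.1⟩⟩
        intro W hW hc hcard
        have hcle : W.card ≤ m'.card := hm'max W (Finset.mem_filter.mpr ⟨hW, hc, hcard⟩)
        rcases hchain W hW m' hm'f.1 (by rw [hc, hm'f.2.1]) with h | h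
        · exact h
        · have heq := Finset.eq_of_subset_of_card_le h hcle
          rw [heq]
    have hM' : ∃ M' : Finset (Fin n), i' < M'.card ∧
        (∀ W ∈ F, c W = j → i' < W.card → M' ⊆ W) ∧
        (M' = Finset.univ ∨ (M' ∈ F ∧ c M' = j)) := by
      rcases (F.filter fun W => c W = j ∧ i' < W.card).eq_empty_or_nonempty with hU | hU
      · refine ⟨Finset.univ, by simp; omega, ?_, Or.inl rfl⟩
        intro W hW hc hcard
        have hmem : W ∈ F.filter fun W => c W = j ∧ i' < W.card :=
          Finset.mem_filter.mpr ⟨hW, hc, hcard⟩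
        rw [hU] at hmem
        exact absurd hmem (Finset.notMem_empty W)
      · obtain ⟨M', hM'mem, hM'min⟩ := Finset.exists_min_image _ (fun W => W.card) hU
        have hM'f := Finset.mem_filter.mp hM'mem
        refine ⟨M', hM'f.2.2, ?_, Or.inr ⟨hM'f.1, hM'f.2.1⟩⟩
        intro W hW hc hcard
        have hcle : M'.card ≤ W.card := hM'min W (Finset.mem_filter.mpr ⟨hW, hc, hcard⟩)
        rcases hchain W hW M' hM'f.1 (by rw [hc, hM'f.2.1]) with h | h
        · have heq := Finset.eq_of_subset_of_card_le h hcle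
          rw [← heq]
        · exact h
    obtain ⟨m', hm'c, hm'all, hm'or⟩ := hm'
    obtain ⟨M', hM'c, hM'all, hM'or⟩ := hM'
    have hsub : m' ⊆ M' := by
      rcases hm'or with rfl | ⟨hm'F, hm'j⟩
      · exact Finset.empty_subset M'
      rcases hM'or with rfl | ⟨hM'F, hM'j⟩
      · exact Finset.subset_univ m'
      rcases hchain m' hm'F M' hM'F (by rw [hm'j, hM'j]) with h | h
      · exact h
      · exact absurd (Finset.card_le_card h) (by omega)
    refine ⟨m', M', hsub, hm'c, hM'c, ?_, ?_⟩
    · intro W hW hc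
      rcases Nat.lt_trichotomy W.card i' with h | h | h
      · exact Or.inl (hm'all W hW hc h)
      · exact absurd h (hskip W hW hc)
      · exact Or.inr (hM'all W hW hc h)
    · intro S hS1 hS2 hScard
      apply hcomp j hj S
      intro W hW hc
      rcases Nat.lt_trichotomy W.card i' with h | h | h
      · exact Or.inl ((hm'all W hW hc h).trans hS1)
      · exact absurd h (hskip W hW hc)
      · exact Or.inr (hS2.trans (hM'all W hW hc h))
  -- a color skipping level i exists
  have hskipex : ∃ j₀, j₀ < k ∧ ∀ W ∈ F, c W = j₀ → W.card ≠ i := by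
    by_contra h
    push_neg at h
    have hinj : ∀ j, j < k → ∃ W, W ∈ F.filter (fun S => S.card = i) ∧ c W = j := by
      intro j hj
      obtain ⟨W, hWF, hWc, hWcard⟩ := h j hj
      exact ⟨W, Finset.mem_filter.mpr ⟨hWF, hWcard⟩, hWc⟩
    choose WW hWW using hinj
    have hcardle : (Finset.range k).card ≤ (F.filter fun S => S.card = i).card := by
      apply Finset.card_le_card_of_injOn (fun j => if hj : j < k then WW j hj else ∅)
      · intro j hj
        have hj' := Finset.mem_range.mp hj
        simp only [dif_pos hj']
        exact (hWW j hj').1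
      · intro j hj j' hj' heq
        have h1 := Finset.mem_range.mp (by exact_mod_cast hj)
        have h2 := Finset.mem_range.mp (by exact_mod_cast hj')
        simp only [dif_pos h1, dif_pos h2] at heq
        rw [← (hWW j h1).2, ← (hWW j' h2).2, heq]
    rw [Finset.card_range] at hcardle
    omega
  obtain ⟨j₀, hj₀k, hj₀skip⟩ := hskipex
  obtain ⟨m₀, M₀, hs₀, hc₀, hC₀, hclass₀, hmem₀⟩ := hslice j₀ hj₀k i hi1 (by omega) hj₀skip
  obtain ⟨S₁, S₂, hS12, hS1, hS2⟩ := sat8_two m₀ M₀ i hs₀ hc₀ hC₀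
  have hS1P : S₁ ∈ F.filter (fun S => S.card = i) :=
    Finset.mem_filter.mpr ⟨hmem₀ _ hS1.1 hS1.2.1 hS1.2.2, hS1.2.2⟩
  have hS2P : S₂ ∈ F.filter (fun S => S.card = i) :=
    Finset.mem_filter.mpr ⟨hmem₀ _ hS2.1 hS2.2.1 hS2.2.2, hS2.2.2⟩
  have hcard2 : (F.filter fun S => S.card = i).card = 2 :=
    le_antisymm hle (Finset.one_lt_card.mpr ⟨S₁, hS1P, S₂, hS2P, hS12⟩)
  obtain ⟨A, B, hABne, hPeq⟩ := Finset.card_eq_two.mp hcard2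
  have hPmem : ∀ S, S ∈ F → S.card = i → S = A ∨ S = B := by
    intro S hSF hScard
    have hmem : S ∈ F.filter (fun S => S.card = i) := Finset.mem_filter.mpr ⟨hSF, hScard⟩
    rw [hPeq] at hmem
    simpa using hmem
  have hAP : A ∈ F.filter (fun S => S.card = i) := by rw [hPeq]; simp
  have hBP : B ∈ F.filter (fun S => S.card = i) := by rw [hPeq]; simp
  have hAF : A ∈ F := (Finset.mem_filter.mp hAP).1
  have hBF : B ∈ F := (Finset.mem_filter.mp hBP).1
  have hAcard : A.card = i := (Finset.mem_filter.mp hAP).2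
  have hBcard : B.card = i := (Finset.mem_filter.mp hBP).2
  obtain ⟨hm₀AB, hM₀AB, hmcard, hMcard⟩ := sat8_pair m₀ M₀ i A B hs₀ hc₀ hC₀
    (fun S h1 h2 h3 => hPmem S (hmem₀ S h1 h2 h3) h3)
  have hclassify : ∀ j, j < k → (∀ W ∈ F, c W = j → W.card ≠ i) →
      ∀ W ∈ F, c W = j → (W ⊆ m₀ ∨ M₀ ⊆ W) := by
    intro j hj hskip W hW hc
    obtain ⟨m', M', hs', hc', hC', hclass', hmem'⟩ := hslice j hj i hi1 (by omega) hskip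
    obtain ⟨hm'AB, hM'AB, _, _⟩ := sat8_pair m' M' i A B hs' hc' hC'
      (fun S h1 h2 h3 => hPmem S (hmem' S h1 h2 h3) h3)
    have hm'm : m' = m₀ := hm'AB.symm.trans hm₀AB
    have hM'M : M' = M₀ := hM'AB.symm.trans hM₀AB
    rw [← hm'm, ← hM'M]
    exact hclass' W hW hc
  have hj₁₂ : c A ≠ c B := by
    intro h
    rcases hchain A hAF B hBF h with hAB' | hAB'
    · exact hABne (Finset.eq_of_subset_of_card_le hAB' (by omega))
    · exact hABne (Finset.eq_of_subset_of_card_le hAB' (by omega)).symm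
  have hj₀A : j₀ ≠ c A := fun h => hj₀skip A hAF h.symm hAcard
  have hj₀B : j₀ ≠ c B := fun h => hj₀skip B hBF h.symm hBcard
  have hmA : m₀ ⊆ A := by rw [← hm₀AB]; exact Finset.inter_subset_left
  have hmB : m₀ ⊆ B := by rw [← hm₀AB]; exact Finset.inter_subset_right
  have hAM : A ⊆ M₀ := by rw [← hM₀AB]; exact Finset.subset_union_left
  have hBM : B ⊆ M₀ := by rw [← hM₀AB]; exact Finset.subset_union_right
  -- successor existence
  have hsucc : ∀ E E' : Finset (Fin n), E ∈ F → E' ∈ F → E.card = i → E'.card = i →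
      c E ≠ c E' → E ∪ E' = M₀ → ((E = A ∧ E' = B) ∨ (E = B ∧ E' = A)) →
      ∃ E₁, E₁ ∈ F ∧ c E₁ = c E ∧ E₁.card = i + 1 ∧ E ⊆ E₁ := by
    intro E E' hEF hE'F hEcard hE'card hcc hEE' hEAB
    by_contra hno
    push_neg at hno
    have hskip' : ∀ W ∈ F, c W = c E → W.card ≠ i + 1 := by
      intro W hW hc hcard
      rcases hchain E hEF W hW hc.symm with h | h
      · exact hno W hW hc hcard h
      · exact absurd (Finset.card_le_card h) (by omega)
    obtain ⟨m'', M'', hs'', hc'', hC'', hclass'', hmem''⟩ :=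
      hslice (c E) (hclt E hEF) (i+1) (by omega) (by omega) hskip'
    have hEm'' : E ⊆ m'' := by
      rcases hclass'' E hEF rfl with h | h
      · exact h
      · exact absurd (Finset.card_le_card h) (by omega)
    obtain ⟨T₁, T₂, hT12, hT1, hT2⟩ := sat8_two m'' M'' (i+1) hs'' hc'' hC''
    have hTM : ∀ T : Finset (Fin n), m'' ⊆ T → T ⊆ M'' → T.card = i+1 → T = M₀ := by
      intro T h1 h2 h3
      have hTF : T ∈ F := hmem'' T h1 h2 h3
      have hET : E ⊆ T := hEm''.trans h1
      by_cases hcT : c T = c E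
      · exact absurd h3 (hskip' T hTF hcT)
      by_cases hcT' : c T = c E'
      · rcases hchain E' hE'F T hTF hcT'.symm with h4 | h4
        · have hMT : M₀ ⊆ T := by rw [← hEE']; exact Finset.union_subset hET h4
          exact (Finset.eq_of_subset_of_card_le hMT (by omega)).symm
        · exact absurd (Finset.card_le_card h4) (by omega)
      · have hskipT : ∀ W ∈ F, c W = c T → W.card ≠ i := by
          intro W hW hc hcard
          rcases hPmem W hW hcard with rfl | rfl <;> rcases hEAB with ⟨rfl, rfl⟩ | ⟨rfl, rfl⟩
          · exact hcT hc.symm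
          · exact hcT' hc.symm
          · exact hcT' hc.symm
          · exact hcT hc.symm
        rcases hclassify (c T) (hclt T hTF) hskipT T hTF rfl with h | h
        · exact absurd (Finset.card_le_card h) (by omega)
        · exact (Finset.eq_of_subset_of_card_le h (by omega)).symm
    have hT1M := hTM T₁ hT1.1 hT1.2.1 hT1.2.2
    have hT2M := hTM T₂ hT2.1 hT2.2.1 hT2.2.2
    exact hT12 (hT1M.trans hT2M.symm)
  -- final contradiction
  have hfinal : ∀ E E' E₁ : Finset (Fin n), E ∈ F → E' ∈ F → E.card = i → E'.card = i →
      c E ≠ c E' → E ∪ E' = M₀ → ((E = A ∧ E' = B) ∨ (E = B ∧ E' = A)) →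
      E₁ ∈ F → c E₁ = c E → E₁.card = i + 1 → E ⊆ E₁ → E₁ ≠ M₀ → False := by
    intro E E' E₁ hEF hE'F hEcard hE'card hcc hEE' hEAB hE₁F hE₁c hE₁card hEE₁ hE₁M
    have hj₀E : j₀ ≠ c E := by
      rcases hEAB with ⟨rfl, _⟩ | ⟨rfl, _⟩
      · exact hj₀A
      · exact hj₀B
    have hmE : m₀ ⊆ E := by
      rcases hEAB with ⟨rfl, _⟩ | ⟨rfl, _⟩
      · exact hmA
      · exact hmB
    have hEM : E ⊆ M₀ := by
      rw [← hEE']; exact Finset.subset_union_left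
    have hpcard : (E₁ \ E).card = 1 := by rw [Finset.card_sdiff_of_subset hEE₁]; omega
    obtain ⟨p, hp⟩ := Finset.card_eq_one.mp hpcard
    have hpE₁ : p ∈ E₁ := (Finset.mem_sdiff.mp (hp ▸ Finset.mem_singleton_self p)).1
    have hpE : p ∉ E := (Finset.mem_sdiff.mp (hp ▸ Finset.mem_singleton_self p)).2
    have hE₁eq : E ∪ {p} = E₁ := by
      have h1 := Finset.union_sdiff_of_subset hEE₁
      rw [hp] at h1
      exact h1
    have hpM : p ∉ M₀ := by
      intro hpM₀
      have hpE' : p ∈ E' := by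
        rw [← hEE'] at hpM₀
        rcases Finset.mem_union.mp hpM₀ with h | h
        · exact absurd h hpE
        · exact h
      have hiE : (E' ∩ E).card + 1 = i := by
        have : E' ∩ E = m₀ := by
          rcases hEAB with ⟨rfl, rfl⟩ | ⟨rfl, rfl⟩
          · rw [Finset.inter_comm]; exact hm₀AB
          · exact hm₀AB
        rw [this]; omega
      have hE'Ecard : (E' \ E).card = 1 := by
        have h1 : (E' \ E).card + (E' ∩ E).card = E'.card := Finset.card_sdiff_add_card_inter E' E
        omega
      have hE'Ep : E' \ E = {p} := by
        obtain ⟨q, hq⟩ := Finset.card_eq_one.mp hE'Ecard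
        have : p ∈ E' \ E := Finset.mem_sdiff.mpr ⟨hpE', hpE⟩
        rw [hq] at this ⊢
        rw [Finset.mem_singleton.mp this]
      have : M₀ = E₁ := by
        rw [← hEE', ← Finset.union_sdiff_self_eq_union, hE'Ep, hE₁eq]
      exact hE₁M this.symm
    have hpm₀ : p ∉ m₀ := fun h => hpM (hs₀ h)
    have hXcard : (m₀ ∪ {p}).card = i := by
      rw [Finset.card_union_of_disjoint (Finset.disjoint_singleton_right.mpr hpm₀)]
      simp
      omega
    have hXF : m₀ ∪ {p} ∉ F := by
      intro h
      rcases hPmem _ h hXcard with hXA | hXB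
      · exact hpM (hAM (hXA ▸ Finset.mem_union_right m₀ (Finset.mem_singleton_self p)))
      · exact hpM (hBM (hXB ▸ Finset.mem_union_right m₀ (Finset.mem_singleton_self p)))
    obtain ⟨W₀, W₁, hW₀F, hW₁F, hW₀c, hW₁c, hW₀X, hW₁X, hW₀₁, hW₁₀⟩ :=
      hwit2 (m₀ ∪ {p}) hXF j₀ (c E) hj₀k (hclt E hEF) hj₀E
    have hW₀M : M₀ ⊆ W₀ := by
      rcases hclassify j₀ hj₀k hj₀skip W₀ hW₀F hW₀c with h | h
      · exact absurd (h.trans Finset.subset_union_left) hW₀X.1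
      · exact h
    have hW₁E : ¬ W₁ ⊆ E := by
      intro h
      exact hW₁₀ ((h.trans hEM).trans hW₀M)
    have hEW₁ : E ⊆ W₁ := (hchain E hEF W₁ hW₁F hW₁c.symm).resolve_right hW₁E
    have hE₁W₁ : E₁ ⊆ W₁ := by
      rcases hchain E₁ hE₁F W₁ hW₁F (by rw [hE₁c, hW₁c]) with h | h
      · exact h
      · rcases Nat.lt_or_ge W₁.card (i+1) with hc1 | hc1
        · have heq : E = W₁ := Finset.eq_of_subset_of_card_le hEW₁ (by omega)
          exact absurd (by rw [heq]) hW₁E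
        · have heq : W₁ = E₁ := Finset.eq_of_subset_of_card_le h (by omega)
          rw [heq]
    have hXW₁ : m₀ ∪ {p} ⊆ W₁ := by
      apply Finset.union_subset
      · exact hmE.trans hEW₁
      · exact Finset.singleton_subset_iff.mpr (hE₁W₁ hpE₁)
    exact hW₁X.2 hXW₁
  obtain ⟨A₁, hA₁F, hA₁c, hA₁card, hAA₁⟩ :=
    hsucc A B hAF hBF hAcard hBcard hj₁₂ hM₀AB (Or.inl ⟨rfl, rfl⟩)
  obtain ⟨B₁, hB₁F, hB₁c, hB₁card, hBB₁⟩ :=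
    hsucc B A hBF hAF hBcard hAcard (Ne.symm hj₁₂) (by rw [Finset.union_comm]; exact hM₀AB)
      (Or.inr ⟨rfl, rfl⟩)
  rcases eq_or_ne A₁ M₀ with hA₁M | hA₁M
  · have hB₁M : B₁ ≠ M₀ := by
      intro h
      have : c A₁ = c B₁ := by rw [hA₁M, h]
      rw [hA₁c, hB₁c] at this
      exact hj₁₂ this
    exact hfinal B A B₁ hBF hAF hBcard hAcard (Ne.symm hj₁₂)
      (by rw [Finset.union_comm]; exact hM₀AB) (Or.inr ⟨rfl, rfl⟩) hB₁F hB₁c hB₁card hBB₁ hB₁M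
  · exact hfinal A B A₁ hAF hBF hAcard hBcard hj₁₂ hM₀AB (Or.inl ⟨rfl, rfl⟩)
      hA₁F hA₁c hA₁card hAA₁ hA₁M

/-- For `n > k ≥ 3`, every induced-`A_{k+1}`-saturated family in `B_n` has size
at least `3n - 1`. -/
theorem stmt8 {n k : ℕ} (hk : 3 ≤ k) (hn : k < n)
    (F : Finset (Finset (Fin n))) (hF : ASaturated (k + 1) F) :
    3 * n - 1 ≤ F.card := by
  classical
  have hn4 : 4 ≤ n := by omega
  have hlevel : ∀ i, 1 ≤ i → i < n → 3 ≤ (F.filter fun S => S.card = i).card := by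
    intro i h1 h2
    rcases Nat.lt_or_ge (i+2) (n+1) with h | h
    · exact sat8_core hk hn hF i h1 (by omega)
    · have hi : i = n - 1 := by omega
      have hdual := sat8_compl_sat hF
      have h3 := sat8_core hk hn hdual 1 (by omega) (by omega)
      rw [sat8_compl_count F (by omega : (1:ℕ) ≤ n)] at h3
      rw [hi]
      exact h3
  have h0 : 1 ≤ (F.filter fun S => S.card = 0).card := by
    refine Finset.card_pos.mpr ⟨∅, Finset.mem_filter.mpr ⟨sat8_mem_empty (by omega) hF, Finset.card_empty⟩⟩
  have hnn : 1 ≤ (F.filter fun S => S.card = n).card := by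
    refine Finset.card_pos.mpr ⟨Finset.univ, Finset.mem_filter.mpr ⟨sat8_mem_univ (by omega) hF, by simp⟩⟩
  have hsum : F.card = ∑ i ∈ Finset.range (n+1), (F.filter fun S => S.card = i).card := by
    apply Finset.card_eq_sum_card_fiberwise
    intro S hS
    simp only [Finset.coe_range, Set.mem_Iio, Finset.mem_coe, Finset.mem_range]
    exact Nat.lt_succ_of_le (by simpa using Finset.card_le_univ S)
  rw [hsum, Finset.sum_range_succ]
  have hsplit : ∑ i ∈ Finset.range n, (F.filter fun S => S.card = i).card =
      (F.filter fun S => S.card = 0).card +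
        ∑ i ∈ Finset.Ico 1 n, (F.filter fun S => S.card = i).card := by
    rw [Finset.range_eq_Ico, Finset.sum_eq_sum_Ico_succ_bot (by omega)]
  rw [hsplit]
  have hmid : 3 * (n - 1) ≤ ∑ i ∈ Finset.Ico 1 n, (F.filter fun S => S.card = i).card := by
    calc 3 * (n-1) = ∑ _i ∈ Finset.Ico 1 n, 3 := by
          rw [Finset.sum_const, Nat.card_Ico, smul_eq_mul, Nat.mul_comm]
      _ ≤ _ := Finset.sum_le_sum (fun i hi =>
          hlevel i (Finset.mem_Ico.mp hi).1 (Finset.mem_Ico.mp hi).2)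
  omega
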